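/- arXiv:math/0109022 — 4 statements merged into one kernel-verified Lean document; each statement's English description precedes it below -/
import Mathlib

section
/- For all natural numbers n ≥ 1 and k ≥ 1, one has C(n+k-1, k-1) · (2n+2k-1) · n! ≥ k · C(2n+2k-1, n), where C(a,b) denotes the binomial coefficient. -/
private lemma abelian_scroll_fact_ineq (j : ℕ) : ∀ m : ℕ,
    Nat.factorial (j+1) * Nat.factorial (2*m+2*j+3) ≤
      (2*m+2*j+3) * (Nat.factorial (m+j+1) * (Nat.factorial (m+1) * Nat.factorial (m+2*j+2)))
  | 0 => by
      have h : 2*0+2*j+3 = (2*j+2)+1 := by ring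
      have h2 : (0:ℕ)+j+1 = j+1 := by ring
      have h3 : (0:ℕ)+2*j+2 = 2*j+2 := by ring
      rw [h, h2, h3, Nat.factorial_succ]
      exact le_of_eq (by simp [Nat.factorial]; ring)
  | m+1 => by
      have ih := abelian_scroll_fact_ineq j m
      have e1 : 2*(m+1)+2*j+3 = ((2*m+2*j+3)+1)+1 := by ring
      have e3 : (m+1)+j+1 = (m+j+1)+1 := by ring
      have e5 : (m+1)+2*j+2 = (m+2*j+2)+1 := by ring
      rw [e1, e3, e5, Nat.factorial_succ, Nat.factorial_succ, Nat.factorial_succ,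
        Nat.factorial_succ (m+1), Nat.factorial_succ (m+2*j+2)]
      set a := 2*m+2*j+3 with ha
      set F := Nat.factorial (2*m+2*j+3) with hF
      have hA : 2*a ≤ ((m+1)+1)*((m+2*j+2)+1) := by
        rw [ha]; nlinarith [Nat.zero_le (m*m), Nat.zero_le (j*m)]
      have h2 : (a+1)*a ≤ ((m+j+1)+1)*(((m+1)+1)*((m+2*j+2)+1)) := by
        calc (a+1)*a = (m+j+2)*(2*a) := by rw [ha]; ring
          _ ≤ (m+j+2)*(((m+1)+1)*((m+2*j+2)+1)) := Nat.mul_le_mul_left _ hA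
          _ = ((m+j+1)+1)*(((m+1)+1)*((m+2*j+2)+1)) := by ring
      calc Nat.factorial (j+1) * ((a+1+1) * ((a+1) * F))
          = (a+1+1)*(a+1) * (Nat.factorial (j+1) * F) := by ring
        _ ≤ (a+1+1)*(a+1) * (a * (Nat.factorial (m+j+1) * (Nat.factorial (m+1) * Nat.factorial (m+2*j+2)))) := Nat.mul_le_mul_left _ ih
        _ = (a+1+1) * ((a+1)*a) * (Nat.factorial (m+j+1) * (Nat.factorial (m+1) * Nat.factorial (m+2*j+2))) := by ring
        _ ≤ (a+1+1) * (((m+j+1)+1)*(((m+1)+1)*((m+2*j+2)+1))) * (Nat.factorial (m+j+1) * (Nat.factorial (m+1) * Nat.factorial (m+2*j+2))) := Nat.mul_le_mul_right _ (Nat.mul_le_mul_left _ h2)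
        _ = (a+1+1) * ((m+j+1+1) * Nat.factorial (m+j+1) * ((m+1+1) * Nat.factorial (m+1) * ((m+2*j+2+1) * Nat.factorial (m+2*j+2)))) := by ring

/-- For all natural numbers `n ≥ 1` and `k ≥ 1`,
`C(n+k-1, k-1) * (2n+2k-1) * n! ≥ k * C(2n+2k-1, n)`. -/
theorem abelian_scroll_key_inequality (n k : ℕ) (hn : 1 ≤ n) (hk : 1 ≤ k) :
    (n + k - 1).choose (k - 1) * (2 * n + 2 * k - 1) * Nat.factorial n ≥
      k * (2 * n + 2 * k - 1).choose n := by
  obtain ⟨m, rfl⟩ : ∃ m, n = m + 1 := ⟨n - 1, by omega⟩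
  obtain ⟨j, rfl⟩ : ∃ j, k = j + 1 := ⟨k - 1, by omega⟩
  have d1 : (m+1) + (j+1) - 1 = m + j + 1 := by omega
  have d2 : (j+1) - 1 = j := by omega
  have d3 : 2*(m+1) + 2*(j+1) - 1 = 2*m + 2*j + 3 := by omega
  rw [d1, d2, d3]
  set C1 := (m+j+1).choose j with hC1
  set C2 := (2*m+2*j+3).choose (m+1) with hC2
  have h1 : C1 * Nat.factorial j * Nat.factorial (m+1) = Nat.factorial (m+j+1) := by
    have := Nat.choose_mul_factorial_mul_factorial (show j ≤ m+j+1 by omega)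
    rwa [show m+j+1-j = m+1 by omega] at this
  have h2 : C2 * Nat.factorial (m+1) * Nat.factorial (m+2*j+2) = Nat.factorial (2*m+2*j+3) := by
    have := Nat.choose_mul_factorial_mul_factorial (show m+1 ≤ 2*m+2*j+3 by omega)
    rwa [show 2*m+2*j+3-(m+1) = m+2*j+2 by omega] at this
  have hc : 0 < Nat.factorial j * (Nat.factorial (m+1) * Nat.factorial (m+2*j+2)) :=
    Nat.mul_pos (Nat.factorial_pos _) (Nat.mul_pos (Nat.factorial_pos _) (Nat.factorial_pos _))
  apply Nat.le_of_mul_le_mul_right _ hc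
  calc (j+1) * C2 * (Nat.factorial j * (Nat.factorial (m+1) * Nat.factorial (m+2*j+2)))
      = (j+1) * Nat.factorial j * (C2 * Nat.factorial (m+1) * Nat.factorial (m+2*j+2)) := by ring
    _ = Nat.factorial (j+1) * Nat.factorial (2*m+2*j+3) := by rw [h2, Nat.factorial_succ j]
    _ ≤ (2*m+2*j+3) * (Nat.factorial (m+j+1) * (Nat.factorial (m+1) * Nat.factorial (m+2*j+2))) := abelian_scroll_fact_ineq j m
    _ = (2*m+2*j+3) * ((C1 * Nat.factorial j * Nat.factorial (m+1)) * (Nat.factorial (m+1) * Nat.factorial (m+2*j+2))) := by rw [h1]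
    _ = C1 * (2*m+2*j+3) * Nat.factorial (m+1) * (Nat.factorial j * (Nat.factorial (m+1) * Nat.factorial (m+2*j+2))) := by ring
end

section
/- For natural numbers n ≥ 1 and k ≥ 1, equality C(n+k-1, k-1) · (2n+2k-1) · n! = k · C(2n+2k-1, n) holds if and only if n = 1 or n = 2. -/
lemma fact_prod (a c : ℕ) :
    a.factorial * ∏ j ∈ Finset.range c, (a + 1 + j) = (a + c).factorial := by
  induction c with
  | zero => simp
  | succ c ih =>
      rw [Finset.prod_range_succ, ← mul_assoc, ih, show a + (c+1) = (a+c) + 1 from by ring,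
        Nat.factorial_succ, show a + 1 + c = a + c + 1 from by ring, mul_comm]

lemma base_lt (p : ℕ) (hp : 2 ≤ p) :
    (2*p+2).factorial < (p+2).factorial * ((p+1).factorial * (p+1).factorial) := by
  induction p, hp using Nat.le_induction with
  | base => decide
  | succ p hp ih =>
      have e1 : 2*(p+1)+2 = (2*p+2) + 1 + 1 := by ring
      have e2 : p+1+2 = (p+2)+1 := by ring
      have e3 : p+1+1 = (p+1)+1 := by ring
      rw [e1, e2, e3, Nat.factorial_succ, Nat.factorial_succ, Nat.factorial_succ,
        Nat.factorial_succ]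
      have hscal : (2*p+2+1+1) * (2*p+2+1) ≤ (p+2+1) * ((p+1+1) * (p+1+1)) := by nlinarith
      calc (2*p+2+1+1) * ((2*p+2+1) * (2*p+2).factorial)
          = ((2*p+2+1+1) * (2*p+2+1)) * (2*p+2).factorial := by ring
        _ ≤ ((p+2+1) * ((p+1+1) * (p+1+1))) * (2*p+2).factorial :=
            Nat.mul_le_mul_right _ hscal
        _ < ((p+2+1) * ((p+1+1) * (p+1+1))) * ((p+2).factorial * ((p+1).factorial * (p+1).factorial)) := by
            have hpos : 0 < (p+2+1) * ((p+1+1) * (p+1+1)) := by positivity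
            exact mul_lt_mul_of_pos_left ih hpos
        _ = (p+2+1) * (p+2).factorial * ((p+1+1) * (p+1).factorial * ((p+1+1) * (p+1).factorial)) := by ring

lemma key_lt (p m : ℕ) (hp : 2 ≤ p) :
    ∏ j ∈ Finset.range p, (p + 2*m + 3 + j) <
      (p+1).factorial * ∏ j ∈ Finset.range p, (m + 2 + j) := by
  induction m with
  | zero =>
      have hA : (p+2).factorial * ∏ j ∈ Finset.range p, (p + 2*0 + 3 + j)
          = (2*p+2).factorial := by
        have := fact_prod (p+2) p
        rw [show p + 2 + p = 2*p+2 from by ring] at this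
        rw [← this]
      have hB : ∏ j ∈ Finset.range p, ((0:ℕ) + 2 + j) = (p+1).factorial := by
        have := fact_prod 1 p
        simp only [Nat.factorial_one, one_mul] at this
        rw [show (1:ℕ) + p = p + 1 from by ring] at this
        rw [← this]
      have hlt : (p+2).factorial * ∏ j ∈ Finset.range p, (p + 2*0 + 3 + j)
          < (p+2).factorial * ((p+1).factorial * ∏ j ∈ Finset.range p, ((0:ℕ) + 2 + j)) := by
        rw [hA, hB]
        exact base_lt p hp
      exact Nat.lt_of_mul_lt_mul_left hlt
  | succ m ih =>
      set s := Finset.range p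
      have hterm : ∀ j ∈ s, ((p + 2*m + 3 + j) + 2) * (m + 2 + j)
          ≤ (p + 2*m + 3 + j) * ((m + 2 + j) + 1) := by
        intro j hj
        have hjp : j < p := Finset.mem_range.mp hj
        nlinarith [hjp]
      have hprod : (∏ j ∈ s, ((p + 2*m + 3 + j) + 2)) * (∏ j ∈ s, (m + 2 + j))
          ≤ (∏ j ∈ s, (p + 2*m + 3 + j)) * (∏ j ∈ s, ((m + 2 + j) + 1)) := by
        rw [← Finset.prod_mul_distrib, ← Finset.prod_mul_distrib]
        exact Finset.prod_le_prod' hterm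
      have hQpos : 0 < ∏ j ∈ s, ((m + 2 + j) + 1) := by positivity
      have hPpos : 0 < ∏ j ∈ s, (m + 2 + j) := by positivity
      have hchain : (∏ j ∈ s, ((p + 2*m + 3 + j) + 2)) * (∏ j ∈ s, (m + 2 + j))
          < ((p+1).factorial * ∏ j ∈ s, ((m + 2 + j) + 1)) * (∏ j ∈ s, (m + 2 + j)) := by
        calc (∏ j ∈ s, ((p + 2*m + 3 + j) + 2)) * (∏ j ∈ s, (m + 2 + j))
            ≤ (∏ j ∈ s, (p + 2*m + 3 + j)) * (∏ j ∈ s, ((m + 2 + j) + 1)) := hprod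
          _ < ((p+1).factorial * ∏ j ∈ s, (m + 2 + j)) * (∏ j ∈ s, ((m + 2 + j) + 1)) :=
              mul_lt_mul_of_pos_right ih hQpos
          _ = ((p+1).factorial * ∏ j ∈ s, ((m + 2 + j) + 1)) * (∏ j ∈ s, (m + 2 + j)) := by
              ring
      have hfin : ∏ j ∈ s, ((p + 2*m + 3 + j) + 2)
          < (p+1).factorial * ∏ j ∈ s, ((m + 2 + j) + 1) :=
        Nat.lt_of_mul_lt_mul_right hchain
      calc ∏ j ∈ s, (p + 2*(m+1) + 3 + j)
          = ∏ j ∈ s, ((p + 2*m + 3 + j) + 2) := Finset.prod_congr rfl (fun j _ => by ring)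
        _ < (p+1).factorial * ∏ j ∈ s, ((m + 2 + j) + 1) := hfin
        _ = (p+1).factorial * ∏ j ∈ s, ((m+1) + 2 + j) := by
            congr 1; exact Finset.prod_congr rfl (fun j _ => by ring)

lemma equality_iff_prod (p m : ℕ) :
    (p + m + 1).choose m * (2*p + 2*m + 3) * (p+1).factorial =
      (m+1) * (2*p + 2*m + 3).choose (p+1) ↔
    (p+1).factorial * ∏ j ∈ Finset.range p, (m + 2 + j) =
      ∏ j ∈ Finset.range p, (p + 2*m + 3 + j) := by
  set F := (p+1).factorial with hF
  set G := (p+2*m+2).factorial with hG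
  set X := 2*p+2*m+3 with hX
  set P := ∏ j ∈ Finset.range p, (m + 2 + j) with hPdef
  set L := ∏ j ∈ Finset.range p, (p + 2*m + 3 + j) with hLdef
  have h1 : (p + m + 1).choose m * m.factorial * F = (p + m + 1).factorial := by
    have := Nat.choose_mul_factorial_mul_factorial (n := p + m + 1) (k := m) (by omega)
    rw [show p + m + 1 - m = p + 1 from by omega] at this
    exact this
  have h2 : X.choose (p+1) * F * G = X.factorial := by
    have := Nat.choose_mul_factorial_mul_factorial (n := X) (k := p + 1) (by omega)
    rw [show X - (p+1) = p + 2*m + 2 from by omega] at this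
    exact this
  have hP : (m+1).factorial * P = (p + m + 1).factorial := by
    have := fact_prod (m+1) p
    rw [show m + 1 + p = p + m + 1 from by ring] at this
    rw [← this, hPdef]
  have hL : G * (L * X) = X.factorial := by
    have h := fact_prod (p+2*m+2) (p+1)
    rw [Finset.prod_range_succ,
        show p + 2*m + 2 + (p+1) = X from by omega,
        show p + 2*m + 2 + 1 + p = X from by omega] at h
    have hprodeq : (∏ j ∈ Finset.range p, (p + 2*m + 2 + 1 + j)) = L :=
      Finset.prod_congr rfl (fun j _ => by ring)
    rw [← mul_assoc, hprodeq] at h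
    rw [mul_assoc] at h
    exact h
  have eq1 : (p + m + 1).choose m * X * F * (m.factorial * G * F)
      = (F * P) * ((m+1).factorial * G * X) := by
    calc (p + m + 1).choose m * X * F * (m.factorial * G * F)
        = ((p + m + 1).choose m * m.factorial * F) * (X * G * F) := by ring
      _ = (p + m + 1).factorial * (X * G * F) := by rw [h1]
      _ = ((m+1).factorial * P) * (X * G * F) := by rw [hP]
      _ = (F * P) * ((m+1).factorial * G * X) := by ring
  have eq2 : (m+1) * X.choose (p+1) * (m.factorial * G * F)
      = L * ((m+1).factorial * G * X) := by
    calc (m+1) * X.choose (p+1) * (m.factorial * G * F)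
        = (X.choose (p+1) * F * G) * ((m+1) * m.factorial) := by ring
      _ = X.factorial * ((m+1) * m.factorial) := by rw [h2]
      _ = X.factorial * (m+1).factorial := by rw [← Nat.factorial_succ]
      _ = (G * (L * X)) * (m+1).factorial := by rw [← hL]
      _ = L * ((m+1).factorial * G * X) := by ring
  have hdpos : 0 < (m+1).factorial * G * X := by positivity
  have hcpos : 0 < m.factorial * G * F := by positivity
  constructor
  · intro h
    have : (F * P) * ((m+1).factorial * G * X) = L * ((m+1).factorial * G * X) := by
      rw [← eq1, ← eq2, h]
    exact Nat.eq_of_mul_eq_mul_right hdpos this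
  · intro h
    have : (p + m + 1).choose m * X * F * (m.factorial * G * F)
        = (m+1) * X.choose (p+1) * (m.factorial * G * F) := by
      rw [eq1, eq2, h]
    exact Nat.eq_of_mul_eq_mul_right hcpos this

/-- For `n ≥ 1`, `k ≥ 1`, equality `C(n+k-1, k-1) * (2n+2k-1) * n! = k * C(2n+2k-1, n)`
holds iff `n = 1` or `n = 2`. -/
theorem abelian_scroll_equality_iff (n k : ℕ) (hn : 1 ≤ n) (hk : 1 ≤ k) :
    (n + k - 1).choose (k - 1) * (2 * n + 2 * k - 1) * Nat.factorial n =
      k * (2 * n + 2 * k - 1).choose n ↔ n = 1 ∨ n = 2 := by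
  obtain ⟨p, rfl⟩ : ∃ p, n = p + 1 := ⟨n - 1, by omega⟩
  obtain ⟨m, rfl⟩ : ∃ m, k = m + 1 := ⟨k - 1, by omega⟩
  have e1 : p + 1 + (m + 1) - 1 = p + m + 1 := by omega
  have e2 : m + 1 - 1 = m := by omega
  have e3 : 2 * (p + 1) + 2 * (m + 1) - 1 = 2*p + 2*m + 3 := by omega
  rw [e1, e2, e3, equality_iff_prod]
  constructor
  · intro h
    by_contra hc
    push_neg at hc
    have hp : 2 ≤ p := by omega
    exact absurd h.symm (Nat.ne_of_lt (key_lt p m hp))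
  · intro h
    have : p = 0 ∨ p = 1 := by omega
    rcases this with h0 | h1
    · subst h0; simp
    · subst h1
      simp [Finset.prod_range_one, Nat.factorial]
      omega
end

section
/- For all natural numbers n ≥ 3 and k ≥ 1, one has the strict inequality C(n+k-1, k-1) · (2n+2k-1) · n! > k · C(2n+2k-1, n). -/
private lemma central_lt_factorial : ∀ n, 3 ≤ n → (2*n).choose n < Nat.factorial (n+1) := by
  intro n hn
  induction n, hn using Nat.le_induction with
  | base => decide
  | succ n hn ih =>
    have e1 : (2*n).choose n * (2*n+1) = (2*n+1).choose n * (n+1) := by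
      have h := Nat.choose_mul_succ_eq (2*n) n
      rwa [show 2*n+1-n = n+1 by omega] at h
    have e2 : (2*n+1).choose (n+1) * (2*n+2) = (2*n+2).choose (n+1) * (n+1) := by
      have h := Nat.choose_mul_succ_eq (2*n+1) (n+1)
      rwa [show 2*n+1+1 = 2*n+2 by omega, show 2*n+2-(n+1) = n+1 by omega] at h
    have e3 : (2*n+1).choose (n+1) = (2*n+1).choose n := Nat.choose_symm_half n
    have goal' : (2*(n+1)).choose (n+1) * ((n+1)*(n+1)) < Nat.factorial (n+1+1) * ((n+1)*(n+1)) := by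
      have key : (2*(n+1)).choose (n+1) * ((n+1)*(n+1)) = (2*n).choose n * ((2*n+1)*(2*n+2)) := by
        rw [show 2*(n+1) = 2*n+2 by ring]
        calc (2*n+2).choose (n+1) * ((n+1)*(n+1))
            = ((2*n+2).choose (n+1) * (n+1)) * (n+1) := by ring
          _ = ((2*n+1).choose (n+1) * (2*n+2)) * (n+1) := by rw [e2]
          _ = ((2*n+1).choose n * (n+1)) * (2*n+2) := by rw [e3]; ring
          _ = ((2*n).choose n * (2*n+1)) * (2*n+2) := by rw [e1]
          _ = (2*n).choose n * ((2*n+1)*(2*n+2)) := by ring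
      rw [key, Nat.factorial_succ]
      have h2 : (2*n+1)*(2*n+2) ≤ (n+1+1)*((n+1)*(n+1)) := by nlinarith
      calc (2*n).choose n * ((2*n+1)*(2*n+2))
          < Nat.factorial (n+1) * ((2*n+1)*(2*n+2)) :=
            mul_lt_mul_of_pos_right ih (by positivity)
        _ ≤ Nat.factorial (n+1) * ((n+1+1)*((n+1)*(n+1))) :=
            Nat.mul_le_mul_left _ h2
        _ = (n+1+1) * Nat.factorial (n+1) * ((n+1)*(n+1)) := by ring
    exact lt_of_mul_lt_mul_right goal' (Nat.zero_le _)

private lemma main_aux (n : ℕ) (hn : 3 ≤ n) : ∀ m : ℕ,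
    (n+m).choose m * (2*n+2*m+1) * Nat.factorial n > (m+1) * (2*n+2*m+1).choose n := by
  intro m
  induction m with
  | zero =>
    simp only [Nat.add_zero, Nat.mul_zero, Nat.choose_zero_right, Nat.one_mul]
    have e1 : (2*n).choose n * (2*n+1) = (2*n+1).choose n * (n+1) := by
      have h := Nat.choose_mul_succ_eq (2*n) n
      rwa [show 2*n+1-n = n+1 by omega] at h
    have hc := central_lt_factorial n hn
    rw [Nat.factorial_succ] at hc
    have goal' : (0+1) * (2*n+1).choose n * (n+1) < (2*n+1) * Nat.factorial n * (n+1) := by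
      calc (0+1) * (2*n+1).choose n * (n+1) = (2*n+1).choose n * (n+1) := by ring
        _ = (2*n).choose n * (2*n+1) := by rw [e1]
        _ < ((n+1) * Nat.factorial n) * (2*n+1) := mul_lt_mul_of_pos_right hc (by positivity)
        _ = (2*n+1) * Nat.factorial n * (n+1) := by ring
    exact lt_of_mul_lt_mul_right goal' (Nat.zero_le _)
  | succ m ih =>
    set a := (n+m).choose m with ha
    set b := (2*n+2*m+1).choose n with hb
    set F := Nat.factorial n with hF
    have i1 : (n+m+1).choose (m+1) * (m+1) = a * (n+m+1) := by
      have h := Nat.add_one_mul_choose_eq (n+m) m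
      rw [← ha] at h
      linarith
    have i2 : (2*n+2*m+2).choose n * (n+2*m+2) = b * (2*n+2*m+2) := by
      have h := Nat.choose_mul_succ_eq (2*n+2*m+1) n
      rw [show 2*n+2*m+1+1 = 2*n+2*m+2 by omega, show 2*n+2*m+2-n = n+2*m+2 by omega] at h
      rw [← hb] at h
      linarith
    have i3 : (2*n+2*m+3).choose n * (n+2*m+3) = (2*n+2*m+2).choose n * (2*n+2*m+3) := by
      have h := Nat.choose_mul_succ_eq (2*n+2*m+2) n
      rw [show 2*n+2*m+2+1 = 2*n+2*m+3 by omega, show 2*n+2*m+3-n = n+2*m+3 by omega] at h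
      linarith
    have key : 2*(m+2)*(2*n+2*m+1) ≤ (n+2*m+2)*(n+2*m+3) := by nlinarith
    rw [show n+(m+1) = n+m+1 by ring, show 2*n+2*(m+1)+1 = 2*n+2*m+3 by ring,
        show m+1+1 = m+2 by ring]
    have goal' : (m+2) * (2*n+2*m+3).choose n * ((m+1)*(n+2*m+2)*(n+2*m+3))
        < (n+m+1).choose (m+1) * (2*n+2*m+3) * F * ((m+1)*(n+2*m+2)*(n+2*m+3)) := by
      calc (m+2) * (2*n+2*m+3).choose n * ((m+1)*(n+2*m+2)*(n+2*m+3))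
          = (m+2)*(m+1)*(n+2*m+2) * ((2*n+2*m+3).choose n * (n+2*m+3)) := by ring
        _ = (m+2)*(m+1)*(n+2*m+2) * ((2*n+2*m+2).choose n * (2*n+2*m+3)) := by rw [i3]
        _ = (m+2)*(m+1)*(2*n+2*m+3) * ((2*n+2*m+2).choose n * (n+2*m+2)) := by ring
        _ = (m+2)*(m+1)*(2*n+2*m+3) * (b * (2*n+2*m+2)) := by rw [i2]
        _ = ((m+1) * b) * (2*(m+2)*(2*n+2*m+3)*(n+m+1)) := by ring
        _ < (a * (2*n+2*m+1) * F) * (2*(m+2)*(2*n+2*m+3)*(n+m+1)) :=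
            mul_lt_mul_of_pos_right ih (by positivity)
        _ = (a*F) * (2*(m+2)*(2*n+2*m+1)) * ((2*n+2*m+3)*(n+m+1)) := by ring
        _ ≤ (a*F) * ((n+2*m+2)*(n+2*m+3)) * ((2*n+2*m+3)*(n+m+1)) := by gcongr
        _ = (a*(n+m+1)) * ((n+2*m+2)*(n+2*m+3)*(2*n+2*m+3)*F) := by ring
        _ = ((n+m+1).choose (m+1) * (m+1)) * ((n+2*m+2)*(n+2*m+3)*(2*n+2*m+3)*F) := by rw [i1]
        _ = (n+m+1).choose (m+1) * (2*n+2*m+3) * F * ((m+1)*(n+2*m+2)*(n+2*m+3)) := by ring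
    exact lt_of_mul_lt_mul_right goal' (Nat.zero_le _)

/-- For all natural numbers `n ≥ 3` and `k ≥ 1`,
`C(n+k-1, k-1) * (2n+2k-1) * n! > k * C(2n+2k-1, n)`. -/
theorem abelian_scroll_strict_inequality (n k : ℕ) (hn : 3 ≤ n) (hk : 1 ≤ k) :
    (n + k - 1).choose (k - 1) * (2 * n + 2 * k - 1) * Nat.factorial n >
      k * (2 * n + 2 * k - 1).choose n := by
  obtain ⟨m, rfl⟩ : ∃ m, k = m + 1 := ⟨k - 1, by omega⟩
  have h := main_aux n hn m
  rw [show n + (m+1) - 1 = n + m by omega, show m + 1 - 1 = m by omega,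
      show 2*n + 2*(m+1) - 1 = 2*n + 2*m + 1 by omega]
  exact h
end

section
/- For all natural numbers n ≥ 3 and k ≥ 1, one has the strict inequality ∏_{l=2}^{n} ((n+k-l+1) · l) > ∏_{l=2}^{n} (2n+2k-l). -/
open Finset in
/-- For all natural numbers `n ≥ 3` and `k ≥ 1`,
`∏_{l=2}^{n} ((n+k-l+1) * l) > ∏_{l=2}^{n} (2n+2k-l)`. -/
theorem abelian_scroll_product_strict_inequality (n k : ℕ) (hn : 3 ≤ n) (hk : 1 ≤ k) :
    ∏ l ∈ Icc 2 n, ((n + k - l + 1) * l) > ∏ l ∈ Icc 2 n, (2 * n + 2 * k - l) := by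
  apply Finset.prod_lt_prod
  · intro i hi
    simp only [mem_Icc] at hi
    omega
  · intro i hi
    simp only [mem_Icc] at hi
    obtain ⟨h2, hn'⟩ := hi
    have hm : n + k - i + 1 = (n + k - i) + 1 := rfl
    set m := n + k - i with hmdef
    have h1 : 2 * n + 2 * k - i = 2 * m + i := by omega
    have h2' : (m + 1) * i = m * i + i := by ring
    have : m * 2 ≤ m * i := Nat.mul_le_mul_left m h2
    omega
  · refine ⟨3, by simp only [mem_Icc]; omega, ?_⟩
    have hm : n + k - 3 ≥ k := by omega
    have : 2 * n + 2 * k - 3 = 2 * (n + k - 3) + 3 := by omega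
    nlinarith [hm]
end
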